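/- For every n ≥ 2, the finite-dimensional Hilbert space ℂ^n supports a subspace-diskcyclic operator: there exist a bounded operator T on ℂ^n and a nontrivial subspace M such that T is M-diskcyclic (e.g., T = 2·I and M the first coordinate axis). -/

import Mathlib

/-- The disk orbit of `x` under `T`. -/
def diskOrb {X : Type*} [NormedAddCommGroup X] [NormedSpace ℂ X] (T : X →L[ℂ] X) (x : X) :
    Set X := {y | ∃ (α : ℂ) (n : ℕ), ‖α‖ ≤ 1 ∧ y = α • (T ^ n) x}

lemma smul_id_pow {X : Type*} [NormedAddCommGroup X] [NormedSpace ℂ X] (c : ℂ) (m : ℕ)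
    (x : X) :
    (((c • (ContinuousLinearMap.id ℂ X)) ^ m) x) = c ^ m • x := by
  induction m with
  | zero => simp
  | succ k ih =>
      rw [pow_succ', ContinuousLinearMap.mul_apply]
      simp only [ContinuousLinearMap.smul_apply, ContinuousLinearMap.id_apply, map_smul, ih,
        smul_smul, pow_succ, mul_comm]

theorem stmt_16 (n : ℕ) (hn : 2 ≤ n) :
    ∃ (T : EuclideanSpace ℂ (Fin n) →L[ℂ] EuclideanSpace ℂ (Fin n))
      (M : Submodule ℂ (EuclideanSpace ℂ (Fin n))), M ≠ ⊥ ∧ M ≠ ⊤ ∧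
        ∃ x : EuclideanSpace ℂ (Fin n),
          (M : Set (EuclideanSpace ℂ (Fin n))) ⊆
            closure (diskOrb T x ∩ (M : Set (EuclideanSpace ℂ (Fin n)))) := by
  set e₀ : EuclideanSpace ℂ (Fin n) := EuclideanSpace.single ⟨0, by omega⟩ 1 with he
  have he0 : e₀ ≠ 0 := by
    intro h
    have := congrArg (fun v => v (⟨0, by omega⟩ : Fin n)) h
    rw [he] at this
    simp [EuclideanSpace.single_apply] at this
  refine ⟨(2 : ℂ) • ContinuousLinearMap.id ℂ _, ℂ ∙ e₀, ?_, ?_, e₀, ?_⟩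
  · exact fun h => he0 (Submodule.span_singleton_eq_bot.1 h)
  · intro h
    have h1 : EuclideanSpace.single (⟨1, by omega⟩ : Fin n) (1 : ℂ) ∈ (ℂ ∙ e₀) := by
      rw [h]; trivial
    rcases Submodule.mem_span_singleton.1 h1 with ⟨c, hc⟩
    have := congrArg (fun v => v (⟨1, by omega⟩ : Fin n)) hc
    have hne : (⟨1, by omega⟩ : Fin n) ≠ ⟨0, by omega⟩ := by
      intro h'; simpa using congrArg Fin.val h'
    simp [he, EuclideanSpace.single_apply, hne, Pi.smul_apply] at this
  · intro y hy
    rcases Submodule.mem_span_singleton.1 hy with ⟨c, hc⟩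
    apply subset_closure
    obtain ⟨m, hm⟩ := pow_unbounded_of_one_lt ‖c‖ (by norm_num : (1:ℝ) < 2)
    refine ⟨⟨c / 2 ^ m, m, ?_, ?_⟩, hy⟩
    · have h2 : ‖(2:ℂ) ^ m‖ = 2 ^ m := by
        rw [norm_pow]; norm_num
      rw [norm_div, h2, div_le_one (by positivity)]
      exact le_of_lt hm
    · rw [smul_id_pow, smul_smul, div_mul_cancel₀ _ (pow_ne_zero m two_ne_zero), hc]
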